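/- Let G be a graph with distinguished vertices u and v and heights h(x) = d_G(u,x). Then every monotone xy-path of G is a shortest xy-path of G. Moreover, if G is uv-straight, then every shortest xy-path of G with x ∈ {u,v} or y ∈ {u,v} is monotone. -/

import Mathlib

open SimpleGraph

variable {V : Type*}

/-- A walk is monotone if its vertices have pairwise distinct heights. -/
def MonoWalk (G : SimpleGraph V) (u : V) {x y : V} (W : G.Walk x y) : Prop :=
  (W.support.map (fun z => G.dist u z)).Nodup

/-- `P` is a shortest `x`-`y` path of `G`. -/
def IsShortestPath (G : SimpleGraph V) {x y : V} (P : G.Walk x y) : Prop :=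
  P.IsPath ∧ P.length = G.dist x y

/-- `P` is an induced path of `G`: a path that equals the subgraph of `G`
induced by its vertex set. -/
def IsInducedPath (G : SimpleGraph V) {x y : V} (P : G.Walk x y) : Prop :=
  P.IsPath ∧ ∀ a b : V, a ∈ P.support → b ∈ P.support → G.Adj a b → P.toSubgraph.Adj a b

/-- A `uv`-trail of `G`: an induced `uv`-path of `G` that is not a shortest
`uv`-path of `G`. -/
def IsTrailPath (G : SimpleGraph V) (u v : V) (P : G.Walk u v) : Prop :=
  IsInducedPath G P ∧ ¬ IsShortestPath G P

/-- A shortest `uv`-trail of `G`: a `uv`-trail of minimum number of edges. -/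
def IsShortestTrail (G : SimpleGraph V) (u v : V) (P : G.Walk u v) : Prop :=
  IsTrailPath G u v P ∧ ∀ Q : G.Walk u v, IsTrailPath G u v Q → P.length ≤ Q.length

/-- `G` is `uv`-straight: every vertex lies on a shortest `uv`-path of `G`. -/
def Straight (G : SimpleGraph V) (u v : V) : Prop :=
  ∀ x : V, ∃ P : G.Walk u v, IsShortestPath G P ∧ x ∈ P.support

/-- Vertex sets `X` and `Y` are anticomplete in `G`: they are disjoint and there
is no edge of `G` between them. -/
def Anticomplete (G : SimpleGraph V) (X Y : Set V) : Prop :=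
  ∀ x ∈ X, ∀ y ∈ Y, x ≠ y ∧ ¬ G.Adj x y

/-- `x` and `y` are connected in the subgraph of `G` induced by `A`. -/
def ConnIn (G : SimpleGraph V) (A : Set V) (x y : V) : Prop :=
  ∃ W : G.Walk x y, ∀ z ∈ W.support, z ∈ A

/-- The closed neighborhood `N_G[A]` of a vertex set `A`. -/
def closedNbhd (G : SimpleGraph V) (A : Set V) : Set V :=
  {y | y ∈ A ∨ ∃ x ∈ A, G.Adj x y}

/-- `(s, t)` is the twist pair of the `uv`-path `P`: `P[u,s]` is the maximal
monotone prefix of `P` and `P[t,v]` is the maximal monotone suffix of `P`. -/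
def IsTwistPair [DecidableEq V] (G : SimpleGraph V) (u v : V) (P : G.Walk u v)
    (s t : V) : Prop :=
  ∃ (hs : s ∈ P.support) (ht : t ∈ P.support),
    MonoWalk G u (P.takeUntil s hs) ∧ MonoWalk G u (P.dropUntil t ht) ∧
    (∀ (s' : V) (hs' : s' ∈ P.support), MonoWalk G u (P.takeUntil s' hs') →
      (P.takeUntil s' hs').length ≤ (P.takeUntil s hs).length) ∧
    (∀ (t' : V) (ht' : t' ∈ P.support), MonoWalk G u (P.dropUntil t' ht') →
      (P.dropUntil t' ht').length ≤ (P.dropUntil t ht).length)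

/-- `(W1, W2)` is a pair of wings for the quadruple `(a, b, c, d)` in `G`
(with respect to heights measured from `u`): `W1` is a monotone `c`-`a*`-path
containing `a`, `W2` is a monotone `b`-`d*`-path containing `d`,
`h(a*) + 1 = h(a) = h(b) ≤ h(c) = h(d) = h(d*) - 1`, `W1 - c` is anticomplete
to `W2`, and `W1` is anticomplete to `W2 - b`. -/
def IsWingPair (G : SimpleGraph V) (u : V) (a b c d : V) {astar dstar : V}
    (W1 : G.Walk c astar) (W2 : G.Walk b dstar) : Prop :=
  W1.IsPath ∧ W2.IsPath ∧ MonoWalk G u W1 ∧ MonoWalk G u W2 ∧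
  a ∈ W1.support ∧ d ∈ W2.support ∧
  G.dist u astar + 1 = G.dist u a ∧ G.dist u a = G.dist u b ∧
  G.dist u b ≤ G.dist u c ∧ G.dist u c = G.dist u d ∧
  G.dist u d + 1 = G.dist u dstar ∧
  Anticomplete G {x | x ∈ W1.support ∧ x ≠ c} {x | x ∈ W2.support} ∧
  Anticomplete G {x | x ∈ W1.support} {x | x ∈ W2.support ∧ x ≠ b}

/-- The quadruple `(a, b, c, d)` is winged in `G`. -/
def Winged (G : SimpleGraph V) (u : V) (a b c d : V) : Prop :=
  ∃ (astar dstar : V) (W1 : G.Walk c astar) (W2 : G.Walk b dstar),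
    IsWingPair G u a b c d W1 W2

/-- The quadruple `(a, b, c, d)` admits a pair of wings `(W1, W2)` in `G` with
`W1` anticomplete to `W2`. -/
def WingedAnti (G : SimpleGraph V) (u : V) (a b c d : V) : Prop :=
  ∃ (astar dstar : V) (W1 : G.Walk c astar) (W2 : G.Walk b dstar),
    IsWingPair G u a b c d W1 W2 ∧
    Anticomplete G {x | x ∈ W1.support} {x | x ∈ W2.support}

/-- For a `uv`-trail `P` of a `uv`-straight graph `G` with twist pair `(s, t)`,
a monotone `uc`-path `S` of `G` with `h(c) = h(s)` is a sidetrack for `P` if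
(S1) `G` contains a monotone `tv`-path `T` with `S - c` anticomplete to `T` and
`S` anticomplete to `T - t`, and (S2) `S` contains the vertex `a` of `P[u,s]`
with `h(a) = h(t)`. -/
def IsSidetrack [DecidableEq V] (G : SimpleGraph V) (u v : V) (P : G.Walk u v)
    (s t : V) {c : V} (S : G.Walk u c) : Prop :=
  S.IsPath ∧ MonoWalk G u S ∧ G.dist u c = G.dist u s ∧
  (∃ (T : G.Walk t v), T.IsPath ∧ MonoWalk G u T ∧
    Anticomplete G {x | x ∈ S.support ∧ x ≠ c} {x | x ∈ T.support} ∧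
    Anticomplete G {x | x ∈ S.support} {x | x ∈ T.support ∧ x ≠ t}) ∧
  (∀ (hs : s ∈ P.support) (a : V),
    a ∈ (P.takeUntil s hs).support → G.dist u a = G.dist u t → a ∈ S.support)

private lemma dist_tri {G : SimpleGraph V} {x z y : V} (h1 : G.Reachable x z)
    (h2 : G.Reachable z y) : G.dist x y ≤ G.dist x z + G.dist z y := by
  obtain ⟨p, hp⟩ := h1.exists_walk_length_eq_dist
  obtain ⟨q, hq⟩ := h2.exists_walk_length_eq_dist
  calc G.dist x y ≤ (p.append q).length := SimpleGraph.dist_le _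
    _ = _ := by rw [SimpleGraph.Walk.length_append, hp, hq]

private lemma adj_dist_le {G : SimpleGraph V} {u a b : V} (h : G.Adj a b)
    (hr : G.Reachable u a) : G.dist u b ≤ G.dist u a + 1 := by
  obtain ⟨p, hp⟩ := hr.exists_walk_length_eq_dist
  calc G.dist u b ≤ (p.concat h).length := SimpleGraph.dist_le _
    _ = _ := by rw [SimpleGraph.Walk.length_concat, hp]

private lemma split_dist [DecidableEq V] {G : SimpleGraph V} {x y : V} {P : G.Walk x y}
    (hP : IsShortestPath G P) {z : V} (hz : z ∈ P.support) :
    G.dist x z = (P.takeUntil z hz).length ∧ G.dist z y = (P.dropUntil z hz).length := by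
  have hsum : (P.takeUntil z hz).length + (P.dropUntil z hz).length = P.length := by
    rw [← SimpleGraph.Walk.length_append, P.take_spec hz]
  have h1 : G.dist x z ≤ (P.takeUntil z hz).length := SimpleGraph.dist_le _
  have h2 : G.dist z y ≤ (P.dropUntil z hz).length := SimpleGraph.dist_le _
  have h3 : G.dist x y ≤ G.dist x z + G.dist z y :=
    dist_tri (P.takeUntil z hz).reachable (P.dropUntil z hz).reachable
  have h4 := hP.2
  omega

private lemma inj_on_shortest [DecidableEq V] {G : SimpleGraph V} {x y : V} {P : G.Walk x y}
    (hP : IsShortestPath G P) {z₁ z₂ : V} (h1 : z₁ ∈ P.support) (h2 : z₂ ∈ P.support)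
    (he : G.dist x z₁ = G.dist x z₂) : z₁ = z₂ := by
  obtain ⟨ha1, hb1⟩ := split_dist hP h1
  obtain ⟨ha2, hb2⟩ := split_dist hP h2
  have hmem : z₁ ∈ (P.takeUntil z₂ h2).support ∨ z₁ ∈ (P.dropUntil z₂ h2).support := by
    have := h1
    rw [← P.take_spec h2, SimpleGraph.Walk.mem_support_append_iff] at this
    exact this
  rcases hmem with hm | hm
  · set Q := P.takeUntil z₂ h2 with hQ
    have hsum : (Q.takeUntil z₁ hm).length + (Q.dropUntil z₁ hm).length = Q.length := by
      rw [← SimpleGraph.Walk.length_append, Q.take_spec hm]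
    have hd : G.dist x z₁ ≤ (Q.takeUntil z₁ hm).length := SimpleGraph.dist_le _
    have hzero : (Q.dropUntil z₁ hm).length = 0 := by omega
    exact SimpleGraph.Walk.eq_of_length_eq_zero hzero
  · set R := P.dropUntil z₂ h2 with hR
    have hsum : (R.takeUntil z₁ hm).length + (R.dropUntil z₁ hm).length = R.length := by
      rw [← SimpleGraph.Walk.length_append, R.take_spec hm]
    have hd : G.dist z₁ y ≤ (R.dropUntil z₁ hm).length := SimpleGraph.dist_le _
    have hs1 : (P.takeUntil z₁ h1).length + (P.dropUntil z₁ h1).length = P.length := by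
      rw [← SimpleGraph.Walk.length_append, P.take_spec h1]
    have hs2 : (P.takeUntil z₂ h2).length + (P.dropUntil z₂ h2).length = P.length := by
      rw [← SimpleGraph.Walk.length_append, P.take_spec h2]
    have hRlen : R.length = (P.dropUntil z₂ h2).length := rfl
    have hzero : (R.takeUntil z₁ hm).length = 0 := by omega
    exact (SimpleGraph.Walk.eq_of_length_eq_zero hzero).symm

private lemma mono_spec {G : SimpleGraph V} {u x y : V} (W : G.Walk x y)
    (hm : MonoWalk G u W) (hr : G.Reachable u x) :
    W.length + min (G.dist u x) (G.dist u y) = max (G.dist u x) (G.dist u y) ∧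
    ∀ k, min (G.dist u x) (G.dist u y) ≤ k → k ≤ max (G.dist u x) (G.dist u y) →
      ∃ z ∈ W.support, G.dist u z = k := by
  induction W with
  | nil =>
    refine ⟨by simp, fun k hk1 hk2 => ?_⟩
    simp only [min_self, max_self] at hk1 hk2
    exact ⟨_, SimpleGraph.Walk.start_mem_support _, by omega⟩
  | @cons a b c hadj W' ih =>
    rw [MonoWalk, SimpleGraph.Walk.support_cons, List.map_cons, List.nodup_cons] at hm
    obtain ⟨hnot, hm'⟩ := hm
    have hr' : G.Reachable u b := hr.trans hadj.reachable
    obtain ⟨hlen, hsurj⟩ := ih hm' hr'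
    have hab : G.dist u b ≤ G.dist u a + 1 := adj_dist_le hadj hr
    have hba : G.dist u a ≤ G.dist u b + 1 := adj_dist_le hadj.symm hr'
    have hne : G.dist u a ≠ G.dist u b := fun h =>
      hnot (h ▸ List.mem_map_of_mem (f := fun z => G.dist u z) W'.start_mem_support)
    have hout : G.dist u a < min (G.dist u b) (G.dist u c) ∨
        max (G.dist u b) (G.dist u c) < G.dist u a := by
      by_contra hc
      push_neg at hc
      obtain ⟨z, hz, hzk⟩ := hsurj (G.dist u a) (by omega) (by omega)
      exact hnot (hzk ▸ List.mem_map_of_mem (f := fun z => G.dist u z) hz)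
    constructor
    · simp only [SimpleGraph.Walk.length_cons]
      omega
    · intro k hk1 hk2
      by_cases hka : k = G.dist u a
      · exact ⟨a, SimpleGraph.Walk.start_mem_support _, hka.symm⟩
      · obtain ⟨z, hz, hzk⟩ := hsurj k (by omega) (by omega)
        exact ⟨z, by simp [hz], hzk⟩

private lemma part1 {G : SimpleGraph V} {u x y : V} [DecidableEq V] (P : G.Walk x y)
    (hp : P.IsPath) (hm : MonoWalk G u P) : IsShortestPath G P := by
  refine ⟨hp, ?_⟩
  by_cases hr : G.Reachable u x
  · obtain ⟨hlen, -⟩ := mono_spec P hm hr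
    have h1 : G.dist x y ≤ P.length := SimpleGraph.dist_le P
    have h2 : G.dist u y ≤ G.dist u x + G.dist x y := dist_tri hr P.reachable
    have h3 : G.dist u x ≤ G.dist u y + G.dist y x :=
      dist_tri (hr.trans P.reachable) P.reverse.reachable
    have h4 : G.dist y x = G.dist x y := SimpleGraph.dist_comm
    omega
  · have hzero : ∀ z ∈ P.support, G.dist u z = 0 := by
      intro z hz
      have hnr : ¬ G.Reachable u z := fun h =>
        hr (h.trans (P.takeUntil z hz).reverse.reachable)
      exact SimpleGraph.dist_eq_zero_of_not_reachable hnr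
    have hlen : P.length = 0 := by
      cases P with
      | nil => rfl
      | @cons _ w _ h q =>
        exfalso
        rw [MonoWalk, SimpleGraph.Walk.support_cons, List.map_cons, List.nodup_cons] at hm
        refine hm.1 ?_
        have e1 : G.dist u x = 0 := hzero x (by simp)
        have e2 : G.dist u w = 0 := hzero w (by simp)
        rw [e1, ← e2]
        exact List.mem_map_of_mem (f := fun z => G.dist u z) q.start_mem_support
    have hxy : x = y := SimpleGraph.Walk.eq_of_length_eq_zero hlen
    subst hxy
    rw [hlen, SimpleGraph.dist_self]

private lemma monoWalk_of_reverse {G : SimpleGraph V} {u x y : V} {P : G.Walk x y}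
    (h : MonoWalk G u P.reverse) : MonoWalk G u P := by
  rw [MonoWalk, SimpleGraph.Walk.support_reverse, List.map_reverse, List.nodup_reverse] at h
  exact h

private lemma shortest_reverse {G : SimpleGraph V} {x y : V} {P : G.Walk x y}
    (h : IsShortestPath G P) : IsShortestPath G P.reverse :=
  ⟨h.1.reverse, by rw [SimpleGraph.Walk.length_reverse, h.2, SimpleGraph.dist_comm]⟩

private lemma straight_eq [DecidableEq V] {G : SimpleGraph V} {u v : V}
    (hst : Straight G u v) (z : V) : G.dist u z + G.dist z v = G.dist u v := by
  obtain ⟨Q, hQ, hzQ⟩ := hst z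
  obtain ⟨h1, h2⟩ := split_dist hQ hzQ
  rw [h1, h2, ← SimpleGraph.Walk.length_append, Q.take_spec hzQ]
  exact hQ.2

private lemma part2_start [DecidableEq V] {G : SimpleGraph V} {u v x y : V}
    (hst : Straight G u v) (P : G.Walk x y) (hx : x = u ∨ x = v)
    (hP : IsShortestPath G P) : MonoWalk G u P := by
  have hinj : ∀ z₁ ∈ P.support, ∀ z₂ ∈ P.support, G.dist u z₁ = G.dist u z₂ → z₁ = z₂ := by
    intro z₁ hz₁ z₂ hz₂ he
    rcases hx with rfl | rfl
    · exact inj_on_shortest hP hz₁ hz₂ he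
    · have e₁ := straight_eq hst z₁
      have e₂ := straight_eq hst z₂
      have hc1 : G.dist x z₁ = G.dist z₁ x := SimpleGraph.dist_comm
      have hc2 : G.dist x z₂ = G.dist z₂ x := SimpleGraph.dist_comm
      exact inj_on_shortest hP hz₁ hz₂ (by omega)
  exact (hP.1.support_nodup).map_on hinj

/-- Every monotone `xy`-path of `G` is a shortest `xy`-path of
`G`; moreover, if `G` is `uv`-straight then every shortest `xy`-path of `G` with
`x ∈ {u, v}` or `y ∈ {u, v}` is monotone. -/
theorem statement3 [Fintype V] [DecidableEq V] (G : SimpleGraph V) (u v : V) :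
    (∀ (x y : V) (P : G.Walk x y), P.IsPath → MonoWalk G u P →
      IsShortestPath G P) ∧
    (Straight G u v → ∀ (x y : V) (P : G.Walk x y),
      (x = u ∨ x = v ∨ y = u ∨ y = v) → IsShortestPath G P →
      MonoWalk G u P) := by
  constructor
  · intro x y P hp hm
    exact part1 P hp hm
  · intro hst x y P hxy hP
    rcases hxy with h | h | h | h
    · exact part2_start hst P (Or.inl h) hP
    · exact part2_start hst P (Or.inr h) hP
    · exact monoWalk_of_reverse (part2_start hst P.reverse (Or.inl h) (shortest_reverse hP))
    · exact monoWalk_of_reverse (part2_start hst P.reverse (Or.inr h) (shortest_reverse hP))
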